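/- Let γ : [0,1] → ℝ² be a C¹ regular curve (γ'(s) ≠ 0 for all s), let θ : ℝ² → ℝ² be a C¹ vector field, let w : ℝ² × ℝ → ℝ be C² and v : ℝ² × ℝ → ℝ be C¹. For t near 0 let γ_t(s) = γ(s) + tθ(γ(s)) be the deformed curve, with tangent γ_t'(s) = (I + tDθ(γ(s)))γ'(s), and let n_t(s) be the unit normal obtained by rotating the unit tangent γ_t'(s)/‖γ_t'(s)‖ by π/2; write n(s) = n_0(s). Then the function t ↦ ∫₀¹ ⟨∇_x w(γ_t(s), t), n_t(s)⟩ · v(γ_t(s), t) · ‖γ_t'(s)‖ ds is differentiable at t = 0 with derivative ∫₀¹ [ (div θ)⟨∇w, n(s)⟩ v − ⟨S(θ)∇w, n(s)⟩ v + ⟨∇ẇ, n(s)⟩ v + ⟨∇w, n(s)⟩ v̇ ] evaluated at x = γ(s), t = 0, multiplied by ‖γ'(s)‖ and integrated in s. -/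

import Mathlib

open MeasureTheory

/-- Rotation by `π/2` in `ℝ²`, sending `(a, b)` to `(-b, a)`. -/
noncomputable def rotHalfPi (v : EuclideanSpace ℝ (Fin 2)) : EuclideanSpace ℝ (Fin 2) :=
  (EuclideanSpace.equiv (Fin 2) ℝ).symm ![-(v 1), v 0]

namespace ShapeAux

open InnerProductSpace

abbrev E2 := EuclideanSpace ℝ (Fin 2)

lemma rot_add (a b : E2) : rotHalfPi (a + b) = rotHalfPi a + rotHalfPi b := by
  refine PiLp.ext fun i => ?_
  fin_cases i <;> (simp [rotHalfPi]; try ring)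

lemma rot_smul (c : ℝ) (a : E2) : rotHalfPi (c • a) = c • rotHalfPi a := by
  refine PiLp.ext fun i => ?_
  fin_cases i <;> simp [rotHalfPi]

lemma rot_zero : rotHalfPi 0 = 0 := by
  refine PiLp.ext fun i => ?_
  fin_cases i <;> simp [rotHalfPi]

noncomputable def rotL : E2 →L[ℝ] E2 :=
  LinearMap.toContinuousLinearMap
    { toFun := rotHalfPi, map_add' := rot_add, map_smul' := rot_smul }

@[simp] lemma rotL_apply (v : E2) : rotL v = rotHalfPi v := rfl

lemma inner_rot (g v : E2) : (inner ℝ g (rotHalfPi v) : ℝ) = g 0 * (-(v 1)) + g 1 * v 0 := by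
  rw [PiLp.inner_apply]
  simp [rotHalfPi, Fin.sum_univ_two]; ring

lemma decomp (x : E2) :
    x = x 0 • EuclideanSpace.single 0 (1:ℝ) + x 1 • EuclideanSpace.single 1 (1:ℝ) := by
  refine PiLp.ext fun i => ?_
  fin_cases i <;>
    simp [PiLp.add_apply, PiLp.smul_apply, EuclideanSpace.single_apply]

lemma trace_eq (B : E2 →L[ℝ] E2) :
    LinearMap.trace ℝ E2 B.toLinearMap
      = B (EuclideanSpace.single 0 (1:ℝ)) 0 + B (EuclideanSpace.single 1 (1:ℝ)) 1 := by
  classical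
  rw [LinearMap.trace_eq_matrix_trace ℝ (EuclideanSpace.basisFun (Fin 2) ℝ).toBasis]
  rw [Matrix.trace]
  simp [Matrix.diag, LinearMap.toMatrix_apply, Fin.sum_univ_two]

lemma key_rot (B : E2 →L[ℝ] E2) (g u : E2) :
    (inner ℝ g (rotHalfPi (B u)) : ℝ)
      = (LinearMap.trace ℝ E2 B.toLinearMap) * (inner ℝ g (rotHalfPi u) : ℝ)
        - (inner ℝ (B g) (rotHalfPi u) : ℝ) := by
  classical
  have hBu : B u = u 0 • B (EuclideanSpace.single 0 (1:ℝ))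
      + u 1 • B (EuclideanSpace.single 1 (1:ℝ)) := by
    conv_lhs => rw [decomp u]; simp
  have hBg : B g = g 0 • B (EuclideanSpace.single 0 (1:ℝ))
      + g 1 • B (EuclideanSpace.single 1 (1:ℝ)) := by
    conv_lhs => rw [decomp g]; simp
  rw [trace_eq, inner_rot, inner_rot, inner_rot, hBu, hBg]
  simp only [PiLp.add_apply, PiLp.smul_apply, smul_eq_mul]
  ring

/-- The basic cancellation: `⟪g, rot(u/‖u‖)⟫ * c * ‖u‖ = ⟪g, rot u⟫ * c`. -/
lemma redn (g u : E2) (c : ℝ) :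
    (inner ℝ g (rotHalfPi (‖u‖⁻¹ • u)) : ℝ) * c * ‖u‖ = (inner ℝ g (rotHalfPi u) : ℝ) * c := by
  rw [rot_smul, real_inner_smul_right]
  rcases eq_or_ne u 0 with rfl | hu
  · simp [rot_zero]
    try ring
  · have h : ‖u‖ ≠ 0 := norm_ne_zero_iff.mpr hu
    field_simp
    try ring

lemma inner_gradient (f : E2 → ℝ) (x y : E2) :
    (inner ℝ (gradient f x) y : ℝ) = fderiv ℝ f x y := by
  rw [gradient, toDual_symm_apply]

noncomputable def J : ((E2 × ℝ) →L[ℝ] ℝ) →L[ℝ] E2 :=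
  ((toDual ℝ E2).symm.toContinuousLinearEquiv.toContinuousLinearMap).comp
    ((ContinuousLinearMap.compL ℝ E2 (E2 × ℝ) ℝ).flip (ContinuousLinearMap.inl ℝ E2 ℝ))

lemma inner_J (T : (E2 × ℝ) →L[ℝ] ℝ) (y : E2) : (inner ℝ (J T) y : ℝ) = T (y, 0) := by
  simp [J, toDual_symm_apply]

variable {w : E2 × ℝ → ℝ} {θ : E2 → E2}

lemma contDiff_fderiv (hw : ContDiff ℝ 2 w) : ContDiff ℝ 1 (fderiv ℝ w) := by
  have h2 : (2 : WithTop ℕ∞) = 1 + 1 := by norm_num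
  exact (contDiff_succ_iff_fderiv.mp (h2 ▸ hw)).2.2

noncomputable def G (w : E2 × ℝ → ℝ) (p : E2 × ℝ) : E2 := J (fderiv ℝ w p)

lemma contDiff_G (hw : ContDiff ℝ 2 w) : ContDiff ℝ 1 (G w) :=
  (J.contDiff).comp (contDiff_fderiv hw)

lemma hasFDerivAt_G (hw : ContDiff ℝ 2 w) (p : E2 × ℝ) :
    HasFDerivAt (G w) (J.comp (fderiv ℝ (fderiv ℝ w) p)) p :=
  J.hasFDerivAt.comp p ((contDiff_fderiv hw).differentiable one_ne_zero p).hasFDerivAt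

lemma slice_fderiv (hw : ContDiff ℝ 2 w) (x : E2) (t : ℝ) :
    fderiv ℝ (fun z => w (z, t)) x
      = (fderiv ℝ w (x, t)).comp (ContinuousLinearMap.inl ℝ E2 ℝ) :=
  (((hw.differentiable (by norm_num) (x, t)).hasFDerivAt).comp x
    ((hasFDerivAt_id x).prodMk (hasFDerivAt_const t x))).fderiv

lemma gradient_slice (hw : ContDiff ℝ 2 w) (x : E2) (t : ℝ) :
    gradient (fun z => w (z, t)) x = G w (x, t) := by
  rw [gradient, slice_fderiv hw]
  rfl

lemma matderiv (hw : ContDiff ℝ 2 w) (hθ : ContDiff ℝ 1 θ) (x y : E2) :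
    (inner ℝ (gradient (fun z => (fderiv ℝ w (z, (0:ℝ))) (θ z, (1:ℝ))) x) y : ℝ)
      = (inner ℝ (fderiv ℝ (G w) (x, 0) (θ x, 1)) y : ℝ)
        + fderiv ℝ w (x, 0) (fderiv ℝ θ x y, 0) := by
  set H := fderiv ℝ (fderiv ℝ w) (x, 0) with hH
  have hA : HasFDerivAt (fun z : E2 => fderiv ℝ w (z, 0))
      (H.comp (ContinuousLinearMap.inl ℝ E2 ℝ)) x :=
    (((contDiff_fderiv hw).differentiable one_ne_zero (x, 0)).hasFDerivAt).comp x
      ((hasFDerivAt_id x).prodMk (hasFDerivAt_const 0 x))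
  have hψ : HasFDerivAt (fun z : E2 => ((θ z, (1:ℝ)) : E2 × ℝ))
      ((fderiv ℝ θ x).prod 0) x :=
    ((hθ.differentiable one_ne_zero x).hasFDerivAt).prodMk (hasFDerivAt_const 1 x)
  have hdot := hA.clm_apply hψ
  rw [inner_gradient, hdot.fderiv]
  rw [(hasFDerivAt_G hw (x, 0)).fderiv]
  have hJ : (inner ℝ ((J.comp H) (θ x, 1)) y : ℝ) = H (θ x, 1) (y, 0) := by
    rw [ContinuousLinearMap.comp_apply, inner_J]
  rw [hJ]
  have hsymm : H (θ x, 1) (y, 0) = H (y, 0) (θ x, 1) := by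
    refine second_derivative_symmetric (f := w) (f' := fderiv ℝ w) (x := ((x, 0) : E2 × ℝ))
      (fun p => ?_) ?_ _ _
    · exact (hw.differentiable (by norm_num) p).hasFDerivAt
    · exact ((contDiff_fderiv hw).differentiable one_ne_zero (x, 0)).hasFDerivAt
  rw [hsymm]
  simp [ContinuousLinearMap.add_apply, ContinuousLinearMap.comp_apply,
    ContinuousLinearMap.flip_apply, ContinuousLinearMap.prod_apply]
  ring

lemma adjoint_term (hw : ContDiff ℝ 2 w) (L : E2 →L[ℝ] E2) (x y : E2) :
    (inner ℝ ((ContinuousLinearMap.adjoint L) (gradient (fun z => w (z, (0:ℝ))) x)) y : ℝ)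
      = fderiv ℝ w (x, 0) (L y, 0) := by
  rw [ContinuousLinearMap.adjoint_inner_left, inner_gradient, slice_fderiv hw]
  rfl

section Curve

variable (γ : ℝ → E2) (θ : E2 → E2) (w : E2 × ℝ → ℝ) (v : E2 × ℝ → ℝ)

noncomputable def cMap (s t : ℝ) : E2 := γ s + t • θ (γ s)

noncomputable def dMap (s t : ℝ) : E2 := deriv γ s + t • (fderiv ℝ θ (γ s)) (deriv γ s)

noncomputable def Phi (t s : ℝ) : ℝ :=
  (inner ℝ (G w (cMap γ θ s t, t)) (rotHalfPi (dMap γ θ s t)) : ℝ) * v (cMap γ θ s t, t)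

noncomputable def Phi' (t s : ℝ) : ℝ :=
  ((inner ℝ (G w (cMap γ θ s t, t)) (rotHalfPi ((fderiv ℝ θ (γ s)) (deriv γ s))) : ℝ)
      + (inner ℝ (fderiv ℝ (G w) (cMap γ θ s t, t) (θ (γ s), 1))
          (rotHalfPi (dMap γ θ s t)) : ℝ)) * v (cMap γ θ s t, t)
    + (inner ℝ (G w (cMap γ θ s t, t)) (rotHalfPi (dMap γ θ s t)) : ℝ)
        * fderiv ℝ v (cMap γ θ s t, t) (θ (γ s), 1)

variable {γ θ w v}

lemma hasDerivAt_Phi (hw : ContDiff ℝ 2 w) (hv : ContDiff ℝ 1 v) (s t : ℝ) :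
    HasDerivAt (fun τ => Phi γ θ w v τ s) (Phi' γ θ w v t s) t := by
  have hc : HasDerivAt (fun τ : ℝ => cMap γ θ s τ) (θ (γ s)) t := by
    have h := ((hasDerivAt_id t).smul_const (θ (γ s))).const_add (γ s)
    simpa [cMap] using h
  have hp : HasDerivAt (fun τ : ℝ => ((cMap γ θ s τ, τ) : E2 × ℝ)) ((θ (γ s), 1)) t :=
    hc.prodMk (hasDerivAt_id t)
  have hG : HasDerivAt (fun τ : ℝ => G w (cMap γ θ s τ, τ))
      (fderiv ℝ (G w) (cMap γ θ s t, t) (θ (γ s), 1)) t := by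
    have := ((contDiff_G hw).differentiable one_ne_zero _).hasFDerivAt.comp_hasDerivAt t hp
    simpa [Function.comp_def] using this
  have hd : HasDerivAt (fun τ : ℝ => dMap γ θ s τ) ((fderiv ℝ θ (γ s)) (deriv γ s)) t := by
    have h := ((hasDerivAt_id t).smul_const ((fderiv ℝ θ (γ s)) (deriv γ s))).const_add
      (deriv γ s)
    simpa [dMap] using h
  have hrot : HasDerivAt (fun τ : ℝ => rotHalfPi (dMap γ θ s τ))
      (rotHalfPi ((fderiv ℝ θ (γ s)) (deriv γ s))) t := by
    have := rotL.hasFDerivAt.comp_hasDerivAt t hd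
    simpa [Function.comp_def] using this
  have hinner := hG.inner ℝ hrot
  have hvv : HasDerivAt (fun τ : ℝ => v (cMap γ θ s τ, τ))
      (fderiv ℝ v (cMap γ θ s t, t) (θ (γ s), 1)) t := by
    have := ((hv.differentiable one_ne_zero _).hasFDerivAt).comp_hasDerivAt t hp
    simpa [Function.comp_def] using this
  have := hinner.mul hvv
  simpa [Phi, Phi', mul_comm, Pi.mul_def] using this

lemma continuous_Phi' (hγ : ContDiff ℝ 1 γ) (hθ : ContDiff ℝ 1 θ)
    (hw : ContDiff ℝ 2 w) (hv : ContDiff ℝ 1 v) :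
    Continuous (fun p : ℝ × ℝ => Phi' γ θ w v p.1 p.2) := by
  have hγc : Continuous γ := hγ.continuous
  have hdγ : Continuous (deriv γ) := hγ.continuous_deriv le_rfl
  have hL : Continuous (fun s : ℝ => fderiv ℝ θ (γ s)) :=
    (hθ.continuous_fderiv one_ne_zero).comp hγc
  have hc : Continuous (fun p : ℝ × ℝ => cMap γ θ p.2 p.1) := by
    unfold cMap
    exact ((hγc.comp continuous_snd).add
      (continuous_fst.smul ((hθ.continuous.comp hγc).comp continuous_snd)))
  have hcp : Continuous (fun p : ℝ × ℝ => ((cMap γ θ p.2 p.1, p.1) : E2 × ℝ)) :=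
    hc.prodMk continuous_fst
  have hd : Continuous (fun p : ℝ × ℝ => dMap γ θ p.2 p.1) := by
    unfold dMap
    exact ((hdγ.comp continuous_snd).add
      (continuous_fst.smul ((hL.comp continuous_snd).clm_apply (hdγ.comp continuous_snd))))
  have hGc : Continuous (fun p : ℝ × ℝ => G w (cMap γ θ p.2 p.1, p.1)) :=
    (contDiff_G hw).continuous.comp hcp
  have hLu : Continuous (fun p : ℝ × ℝ => (fderiv ℝ θ (γ p.2)) (deriv γ p.2)) :=
    (hL.comp continuous_snd).clm_apply (hdγ.comp continuous_snd)
  have hrot1 : Continuous (fun p : ℝ × ℝ => rotHalfPi ((fderiv ℝ θ (γ p.2)) (deriv γ p.2))) :=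
    rotL.continuous.comp hLu
  have hrotd : Continuous (fun p : ℝ × ℝ => rotHalfPi (dMap γ θ p.2 p.1)) :=
    rotL.continuous.comp hd
  have hθγ : Continuous (fun p : ℝ × ℝ => ((θ (γ p.2), (1:ℝ)) : E2 × ℝ)) :=
    ((hθ.continuous.comp hγc).comp continuous_snd).prodMk continuous_const
  have hDG : Continuous (fun p : ℝ × ℝ =>
      fderiv ℝ (G w) (cMap γ θ p.2 p.1, p.1) (θ (γ p.2), 1)) :=
    (((contDiff_G hw).continuous_fderiv one_ne_zero).comp hcp).clm_apply hθγ
  have hvc : Continuous (fun p : ℝ × ℝ => v (cMap γ θ p.2 p.1, p.1)) :=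
    hv.continuous.comp hcp
  have hDv : Continuous (fun p : ℝ × ℝ =>
      fderiv ℝ v (cMap γ θ p.2 p.1, p.1) (θ (γ p.2), 1)) :=
    ((hv.continuous_fderiv one_ne_zero).comp hcp).clm_apply hθγ
  unfold Phi'
  exact (((hGc.inner hrot1).add (hDG.inner hrotd)).mul hvc).add ((hGc.inner hrotd).mul hDv)

lemma continuous_Phi (hγ : ContDiff ℝ 1 γ) (hθ : ContDiff ℝ 1 θ)
    (hw : ContDiff ℝ 2 w) (hv : ContDiff ℝ 1 v) :
    Continuous (fun p : ℝ × ℝ => Phi γ θ w v p.1 p.2) := by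
  have hγc : Continuous γ := hγ.continuous
  have hdγ : Continuous (deriv γ) := hγ.continuous_deriv le_rfl
  have hL : Continuous (fun s : ℝ => fderiv ℝ θ (γ s)) :=
    (hθ.continuous_fderiv one_ne_zero).comp hγc
  have hc : Continuous (fun p : ℝ × ℝ => cMap γ θ p.2 p.1) := by
    unfold cMap
    exact ((hγc.comp continuous_snd).add
      (continuous_fst.smul ((hθ.continuous.comp hγc).comp continuous_snd)))
  have hcp : Continuous (fun p : ℝ × ℝ => ((cMap γ θ p.2 p.1, p.1) : E2 × ℝ)) :=
    hc.prodMk continuous_fst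
  have hd : Continuous (fun p : ℝ × ℝ => dMap γ θ p.2 p.1) := by
    unfold dMap
    exact ((hdγ.comp continuous_snd).add
      (continuous_fst.smul ((hL.comp continuous_snd).clm_apply (hdγ.comp continuous_snd))))
  have hGc : Continuous (fun p : ℝ × ℝ => G w (cMap γ θ p.2 p.1, p.1)) :=
    (contDiff_G hw).continuous.comp hcp
  have hrotd : Continuous (fun p : ℝ × ℝ => rotHalfPi (dMap γ θ p.2 p.1)) :=
    rotL.continuous.comp hd
  have hvc : Continuous (fun p : ℝ × ℝ => v (cMap γ θ p.2 p.1, p.1)) :=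
    hv.continuous.comp hcp
  unfold Phi
  exact (hGc.inner hrotd).mul hvc

end Curve

end ShapeAux

open ShapeAux

/-- Shape derivative of the Nitsche boundary term `∫_Γ (∂w/∂n) v ds` (Lemma 4.3 of the
paper), for a parametrized `C¹` regular curve `γ` in `ℝ²` deformed by `T_t(x) = x + tθ(x)`:
the map `t ↦ ∫₀¹ ⟨∇w(γ_t(s), t), n_t(s)⟩ v(γ_t(s), t) ‖γ_t'(s)‖ ds` is differentiable at
`t = 0` with derivative
`∫₀¹ [(div θ)⟨∇w, n⟩v − ⟨S(θ)∇w, n⟩v + ⟨∇ẇ, n⟩v + ⟨∇w, n⟩v̇] ‖γ'‖ ds`, where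
`S(θ) = Dθ + (Dθ)ᵀ` and `ẇ(x) = fderiv ℝ w (x,0) (θ x, 1)` is the material derivative. -/
theorem shape_derivative_nitsche_boundary_term
    (γ : ℝ → EuclideanSpace ℝ (Fin 2)) (hγ : ContDiff ℝ 1 γ)
    (hreg : ∀ s ∈ Set.Icc (0 : ℝ) 1, deriv γ s ≠ 0)
    (θ : EuclideanSpace ℝ (Fin 2) → EuclideanSpace ℝ (Fin 2)) (hθ : ContDiff ℝ 1 θ)
    (w : EuclideanSpace ℝ (Fin 2) × ℝ → ℝ) (hw : ContDiff ℝ 2 w)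
    (v : EuclideanSpace ℝ (Fin 2) × ℝ → ℝ) (hv : ContDiff ℝ 1 v) :
    HasDerivAt
      (fun t : ℝ => ∫ s in (0 : ℝ)..1,
        let γt : EuclideanSpace ℝ (Fin 2) := γ s + t • θ (γ s)
        let γt' : EuclideanSpace ℝ (Fin 2) := deriv γ s + t • (fderiv ℝ θ (γ s)) (deriv γ s)
        let nt : EuclideanSpace ℝ (Fin 2) := rotHalfPi (‖γt'‖⁻¹ • γt')
        (inner ℝ (gradient (fun z => w (z, t)) γt) nt : ℝ) * v (γt, t) * ‖γt'‖)
      (∫ s in (0 : ℝ)..1,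
        let x : EuclideanSpace ℝ (Fin 2) := γ s
        let nrm : EuclideanSpace ℝ (Fin 2) := rotHalfPi (‖deriv γ s‖⁻¹ • deriv γ s)
        let gradw : EuclideanSpace ℝ (Fin 2) := gradient (fun z => w (z, (0 : ℝ))) x
        ((LinearMap.trace ℝ (EuclideanSpace ℝ (Fin 2)) (fderiv ℝ θ x).toLinearMap) *
            (inner ℝ gradw nrm : ℝ) * v (x, 0)
          - (inner ℝ ((fderiv ℝ θ x) gradw +
              (ContinuousLinearMap.adjoint (fderiv ℝ θ x)) gradw) nrm : ℝ) * v (x, 0)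
          + (inner ℝ (gradient (fun z => (fderiv ℝ w (z, (0 : ℝ))) (θ z, (1 : ℝ))) x) nrm : ℝ) *
              v (x, 0)
          + (inner ℝ gradw nrm : ℝ) * (fderiv ℝ v (x, (0 : ℝ))) (θ x, (1 : ℝ))) * ‖deriv γ s‖)
      0 := by
  -- bound for the derivative on a compact set
  obtain ⟨C, hC⟩ := (isCompact_Icc.prod isCompact_Icc :
      IsCompact ((Set.Icc (-1:ℝ) 1) ×ˢ (Set.Icc (0:ℝ) 1))).exists_bound_of_continuousOn
    ((continuous_Phi' hγ hθ hw hv).continuousOn)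
  have huIoc : Set.uIoc (0:ℝ) 1 = Set.Ioc (0:ℝ) 1 := Set.uIoc_of_le (by norm_num)
  have hmain := (intervalIntegral.hasDerivAt_integral_of_dominated_loc_of_deriv_le
      (F := fun t s => Phi γ θ w v t s) (F' := fun t s => Phi' γ θ w v t s)
      (bound := fun _ => C) (μ := volume) (x₀ := (0:ℝ)) (a := (0:ℝ)) (b := (1:ℝ))
      (Metric.ball_mem_nhds (0:ℝ) one_pos)
      (Filter.Eventually.of_forall fun t =>
        (((continuous_Phi hγ hθ hw hv).comp
          (continuous_const.prodMk continuous_id)).aestronglyMeasurable))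
      (((continuous_Phi hγ hθ hw hv).comp
          (continuous_const.prodMk continuous_id)).intervalIntegrable 0 1)
      (((continuous_Phi' hγ hθ hw hv).comp
          (continuous_const.prodMk continuous_id)).aestronglyMeasurable)
      (Filter.Eventually.of_forall fun s hs t ht => by
        refine hC (t, s) ⟨?_, ?_⟩
        · have := Metric.mem_ball.mp ht
          simp only [dist_zero_right, Real.norm_eq_abs] at this
          exact ⟨by linarith [neg_abs_le t, abs_nonneg t], le_of_lt (lt_of_abs_lt this)⟩
        · rw [huIoc] at hs
          exact ⟨le_of_lt hs.1, hs.2⟩)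
      (intervalIntegrable_const)
      (Filter.Eventually.of_forall fun s _ t _ => hasDerivAt_Phi hw hv s t)).2
  have h1 : (fun t : ℝ => ∫ s in (0 : ℝ)..1,
        let γt : EuclideanSpace ℝ (Fin 2) := γ s + t • θ (γ s)
        let γt' : EuclideanSpace ℝ (Fin 2) := deriv γ s + t • (fderiv ℝ θ (γ s)) (deriv γ s)
        let nt : EuclideanSpace ℝ (Fin 2) := rotHalfPi (‖γt'‖⁻¹ • γt')
        (inner ℝ (gradient (fun z => w (z, t)) γt) nt : ℝ) * v (γt, t) * ‖γt'‖)
      = fun t => ∫ s in (0:ℝ)..1, Phi γ θ w v t s := by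
    refine funext fun t => intervalIntegral.integral_congr fun s _ => ?_
    simp only [Phi, cMap, dMap]
    rw [gradient_slice hw]
    exact redn _ _ _
  have h2 : (∫ s in (0 : ℝ)..1,
        let x : EuclideanSpace ℝ (Fin 2) := γ s
        let nrm : EuclideanSpace ℝ (Fin 2) := rotHalfPi (‖deriv γ s‖⁻¹ • deriv γ s)
        let gradw : EuclideanSpace ℝ (Fin 2) := gradient (fun z => w (z, (0 : ℝ))) x
        ((LinearMap.trace ℝ (EuclideanSpace ℝ (Fin 2)) (fderiv ℝ θ x).toLinearMap) *
            (inner ℝ gradw nrm : ℝ) * v (x, 0)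
          - (inner ℝ ((fderiv ℝ θ x) gradw +
              (ContinuousLinearMap.adjoint (fderiv ℝ θ x)) gradw) nrm : ℝ) * v (x, 0)
          + (inner ℝ (gradient (fun z => (fderiv ℝ w (z, (0 : ℝ))) (θ z, (1 : ℝ))) x) nrm : ℝ) *
              v (x, 0)
          + (inner ℝ gradw nrm : ℝ) * (fderiv ℝ v (x, (0 : ℝ))) (θ x, (1 : ℝ))) * ‖deriv γ s‖)
      = ∫ s in (0:ℝ)..1, Phi' γ θ w v 0 s := by
    refine intervalIntegral.integral_congr fun s hs => ?_
    have hu : deriv γ s ≠ 0 := by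
      refine hreg s ?_
      rwa [Set.uIcc_of_le (by norm_num : (0:ℝ) ≤ 1)] at hs
    have hnu : ‖deriv γ s‖ ≠ 0 := norm_ne_zero_iff.mpr hu
    simp only [Phi', cMap, dMap, zero_smul, add_zero]
    rw [key_rot (fderiv ℝ θ (γ s)) (G w (γ s, 0)) (deriv γ s)]
    simp only [rot_smul, real_inner_smul_right, inner_add_left]
    rw [matderiv hw hθ (γ s) (rotHalfPi (deriv γ s))]
    rw [adjoint_term hw (fderiv ℝ θ (γ s)) (γ s) (rotHalfPi (deriv γ s))]
    rw [gradient_slice hw (γ s) 0]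
    field_simp
    ring
  rw [h1, h2]
  exact hmain
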